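/- Suppose the experiment Π = (S, π) is a weighted garbling of the experiment Π' = (S', π') with weight γ ∈ Γ(Π'), and let γ̄ = max_{s'∈S'} γ(s'). Then Π' is (1/γ̄)-conditionally more informative than Π; concretely, the experiment Π'' on S' × {0,1} defined by π''(s',1|θ) = γ(s')π'(s'|θ)/γ̄ and π''(s',0|θ) = π'(s'|θ) − π''(s',1|θ) is a well-defined experiment whose marginal on S' equals π', satisfies ∑_{s'} π''(s',1|θ) = 1/γ̄ for every θ, satisfies π''(s',1|θ) = π'(s'|θ)·(γ(s')/γ̄) for all s',θ, and its conditional-on-1 experiment π''(s'|1,θ) = γ(s')π'(s'|θ) is such that Π is a garbling of it. -/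
import Mathlib


/-- If Π = (S, π) is a weighted garbling of Π' = (S', π') with weight γ and
γ̄ = max γ, then the experiment Π'' on S' × Bool defined by
π''(s',1|θ) = γ(s')π'(s'|θ)/γ̄ and π''(s',0|θ) = π'(s'|θ) − π''(s',1|θ)
is a well-defined experiment whose marginal on S' is π', with
∑_{s'} π''(s',1|θ) = 1/γ̄, π''(s',1|θ) = π'(s'|θ)·(γ(s')/γ̄), and Π is a garbling
of the conditional-on-1 experiment π''(s'|1,θ) = γ(s')π'(s'|θ). -/
theorem weighted_garbling_implies_conditionally_more_informative
    {Θ S S' : Type*} [Fintype Θ] [Nonempty Θ]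
    [Fintype S] [Nonempty S] [Fintype S'] [Nonempty S']
    (π : S → Θ → ℝ) (π' : S' → Θ → ℝ)
    (hπ0 : ∀ s θ, 0 ≤ π s θ) (hπ1 : ∀ θ, ∑ s, π s θ = 1)
    (hπ'0 : ∀ s' θ, 0 ≤ π' s' θ) (hπ'1 : ∀ θ, ∑ s', π' s' θ = 1)
    (γ : S' → ℝ) (hγ0 : ∀ s', 0 ≤ γ s')
    (hγ1 : ∀ θ, ∑ s', γ s' * π' s' θ = 1)
    (φ : S' → S → ℝ) (hφ0 : ∀ s' s, 0 ≤ φ s' s) (hφ1 : ∀ s', ∑ s, φ s' s = 1)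
    (hwg : ∀ s θ, π s θ = ∑ s', φ s' s * γ s' * π' s' θ)
    (γbar : ℝ) (hγbar : IsGreatest (Set.range γ) γbar) :
    ∀ π'' : S' × Bool → Θ → ℝ,
      (π'' = fun p θ => if p.2 then γ p.1 * π' p.1 θ / γbar
                        else π' p.1 θ - γ p.1 * π' p.1 θ / γbar) →
      -- Π'' is a well-defined experiment
      (∀ p θ, 0 ≤ π'' p θ) ∧ (∀ θ, ∑ p : S' × Bool, π'' p θ = 1) ∧
      -- its marginal on S' equals π'
      (∀ s' θ, π'' (s', false) θ + π'' (s', true) θ = π' s' θ) ∧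
      -- ∑_{s'} π''(s',1|θ) = 1/γ̄ for every θ
      (∀ θ, ∑ s', π'' (s', true) θ = 1 / γbar) ∧
      -- π''(s',1|θ) = π'(s'|θ)·(γ(s')/γ̄)
      (∀ s' θ, π'' (s', true) θ = π' s' θ * (γ s' / γbar)) ∧
      -- Π is a garbling of the conditional-on-1 experiment π''(s'|1,θ) = γ(s')π'(s'|θ)
      (∃ ψ : S' → S → ℝ, (∀ s' s, 0 ≤ ψ s' s) ∧ (∀ s', ∑ s, ψ s' s = 1) ∧
        ∀ s θ, π s θ = ∑ s', ψ s' s * (γ s' * π' s' θ)) := by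
  intro π'' hdef
  subst hdef
  have hle : ∀ s', γ s' ≤ γbar := fun s' => hγbar.2 ⟨s', rfl⟩
  have hpos : 0 < γbar := by
    obtain ⟨θ⟩ := ‹Nonempty Θ›
    by_contra h
    push_neg at h
    have h2 : ∑ s', γ s' * π' s' θ ≤ 0 :=
      Finset.sum_nonpos fun s' _ =>
        mul_nonpos_of_nonpos_of_nonneg ((hle s').trans h) (hπ'0 s' θ)
    linarith [hγ1 θ]
  have htrue : ∀ s' θ, (0:ℝ) ≤ γ s' * π' s' θ / γbar :=
    fun s' θ => div_nonneg (mul_nonneg (hγ0 s') (hπ'0 s' θ)) hpos.le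
  have hfalse : ∀ s' θ, (0:ℝ) ≤ π' s' θ - γ s' * π' s' θ / γbar := by
    intro s' θ
    rw [sub_nonneg, div_le_iff₀ hpos]
    nlinarith [hle s', hπ'0 s' θ, hγ0 s']
  refine ⟨?_, ?_, ?_, ?_, ?_, ?_⟩
  · rintro ⟨s', b⟩ θ
    cases b
    · simpa using hfalse s' θ
    · simpa using htrue s' θ
  · intro θ
    rw [Fintype.sum_prod_type]
    simp only [Fintype.sum_bool, if_true, Bool.false_eq_true, if_false]
    have : ∀ s', γ s' * π' s' θ / γbar + (π' s' θ - γ s' * π' s' θ / γbar) = π' s' θ := by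
      intro s'; ring
    rw [Finset.sum_congr rfl fun s' _ => this s', hπ'1 θ]
  · intro s' θ; simp
  · intro θ
    simp only [if_true]
    rw [← Finset.sum_div, hγ1 θ]
  · intro s' θ; simp only [if_true]; ring
  · refine ⟨φ, hφ0, hφ1, fun s θ => ?_⟩
    rw [hwg s θ]
    exact Finset.sum_congr rfl fun s' _ => by ring
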